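/- Let U be an open neighborhood of 0 in ℝ^n and let M : U → M_d(ℝ) be a real-analytic family of d×d matrices. Suppose M(0) has a simple real eigenvalue λ_0 ≠ 0 (i.e. λ_0 is a root of multiplicity one of the characteristic polynomial of M(0)) with associated unit eigenvector X_0. Then there exist an open neighborhood V ⊆ U of 0 and real-analytic maps f : V → ℝ and X : V → ℝ^d such that f(0) = λ_0, X(0) = X_0, and for every v ∈ V, f(v) is a simple eigenvalue of M(v) with eigenvector X(v) ≠ 0. -/

import Mathlib

open Matrix Polynomial

/-- Determinant of a matrix with analytic entries is analytic. -/
lemma analyticAt_det_of_entries {E : Type*} [NormedAddCommGroup E] [NormedSpace ℝ E]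
    {m : ℕ} {A : E → Matrix (Fin m) (Fin m) ℝ} {x : E}
    (h : ∀ i j, AnalyticAt ℝ (fun y => A y i j) x) :
    AnalyticAt ℝ (fun y => (A y).det) x := by
  simp only [Matrix.det_apply, Units.smul_def, zsmul_eq_mul]
  exact Finset.analyticAt_fun_sum _ fun σ _ =>
    analyticAt_const.mul (Finset.analyticAt_fun_prod _ fun i _ => h (σ i) i)

lemma charpoly_eval {m : ℕ} (A : Matrix (Fin m) (Fin m) ℝ) (t : ℝ) :
    A.charpoly.eval t = (t • (1 : Matrix (Fin m) (Fin m) ℝ) - A).det := by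
  have : A.charpoly.eval t = (evalRingHom t) A.charpoly := rfl
  rw [this, Matrix.charpoly, RingHom.map_det]
  · congr 1
    ext i j
    by_cases hij : i = j <;>
      simp [hij, Matrix.charmatrix_apply_eq, Matrix.charmatrix_apply_ne, Matrix.one_apply,
        Matrix.smul_apply, Matrix.sub_apply]

lemma rootMultiplicity_eq_one' {p : ℝ[X]} {t : ℝ} (hp : p ≠ 0) (h0 : p.IsRoot t)
    (h1 : p.derivative.eval t ≠ 0) : p.rootMultiplicity t = 1 := by
  have hpos : 0 < p.rootMultiplicity t := (Polynomial.rootMultiplicity_pos hp).2 h0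
  have hlt : ¬ (1 < p.rootMultiplicity t) := by
    intro hlt
    have := (Polynomial.lt_rootMultiplicity_iff_isRoot_iterate_derivative_of_mem_nonZeroDivisors
      (t := t) (n := 1) hp (by simpa using (one_mem (nonZeroDivisors ℝ)))).1 hlt 1 le_rfl
    simpa using h1 this
  omega

lemma derivative_ne_zero_of_rootMultiplicity_eq_one {p : ℝ[X]} {t : ℝ}
    (hp : p ≠ 0) (h : p.rootMultiplicity t = 1) :
    p.IsRoot t ∧ p.derivative.eval t ≠ 0 := by
  have h0 : p.IsRoot t := (Polynomial.rootMultiplicity_pos hp).1 (by omega)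
  refine ⟨h0, fun h1 => ?_⟩
  have : 1 < p.rootMultiplicity t := by
    refine (Polynomial.lt_rootMultiplicity_iff_isRoot_iterate_derivative_of_mem_nonZeroDivisors
      (t := t) (n := 1) hp (by simpa using (one_mem (nonZeroDivisors ℝ)))).2 ?_
    intro m hm
    interval_cases m
    · simpa using h0
    · simpa using h1
  omega

set_option maxHeartbeats 1000000 in
lemma adjugate_eig {m : ℕ} (A : Matrix (Fin m) (Fin m) ℝ)
    {lam : ℝ} {x : Fin m → ℝ} (hx : A *ᵥ x = lam • x) (hroot : A.charpoly.IsRoot lam) :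
    (lam • (1 : Matrix (Fin m) (Fin m) ℝ) - A).adjugate *ᵥ x
      = (A.charpoly.derivative.eval lam) • x := by
  set p := A.charpoly with hp
  set q := p /ₘ (X - C lam) with hqdef
  have hfact : (X - C lam) * q = p := mul_divByMonic_eq_iff_isRoot.2 hroot
  have hq : q.eval lam = p.derivative.eval lam := by
    have h1 := congrArg derivative hfact
    rw [derivative_mul, derivative_sub, derivative_X, derivative_C] at h1
    have h2 := congrArg (eval lam) h1
    simp only [eval_add, eval_mul, eval_sub, eval_X, eval_C, sub_self, zero_mul, mul_zero,
      sub_zero, zero_add, one_mul] at h2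
    linarith [h2]
  have key : (fun t : ℝ => (t • (1:Matrix (Fin m) (Fin m) ℝ) - A).adjugate *ᵥ x)
      = fun t : ℝ => q.eval t • x := by
    have hcont1 : Continuous fun t : ℝ =>
        (t • (1:Matrix (Fin m) (Fin m) ℝ) - A).adjugate *ᵥ x :=
      (((continuous_id.smul continuous_const).sub
        continuous_const).matrix_adjugate).matrix_mulVec continuous_const
    have hcont2 : Continuous fun t : ℝ => q.eval t • x := q.continuous.smul continuous_const
    have hpne : p ≠ 0 := (Matrix.charpoly_monic A).ne_zero
    have hdense : Dense {t : ℝ | p.eval t ≠ 0} := by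
      have hfin : Set.Finite {t : ℝ | p.IsRoot t} := Polynomial.finite_setOf_isRoot hpne
      have := hfin.countable.dense_compl ℝ
      convert this using 1
      rfl
    refine Continuous.ext_on hdense hcont1 hcont2 ?_
    intro t ht
    simp only [Set.mem_setOf_eq] at ht
    set B := t • (1:Matrix (Fin m) (Fin m) ℝ) - A with hB
    have hdetB : B.det = p.eval t := (charpoly_eval A t).symm
    have hu : IsUnit B.det := by rw [hdetB]; exact isUnit_iff_ne_zero.2 ht
    haveI := B.invertibleOfIsUnitDet hu
    apply Matrix.mulVec_injective_of_invertible B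
    have hBx : B *ᵥ x = (t - lam) • x := by
      rw [hB, Matrix.sub_mulVec, Matrix.smul_mulVec, Matrix.one_mulVec, hx, sub_smul]
    calc B *ᵥ (B.adjugate *ᵥ x) = (B * B.adjugate) *ᵥ x := Matrix.mulVec_mulVec x B B.adjugate
      _ = (B.det • (1 : Matrix (Fin m) (Fin m) ℝ)) *ᵥ x := by rw [Matrix.mul_adjugate]
      _ = p.eval t • x := by rw [hdetB, Matrix.smul_mulVec, Matrix.one_mulVec]
      _ = ((t - lam) * q.eval t) • x := by
          rw [← hfact]; simp [mul_comm]
      _ = q.eval t • ((t - lam) • x) := by rw [smul_smul, mul_comm]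
      _ = q.eval t • (B *ᵥ x) := by rw [hBx]
      _ = B *ᵥ (q.eval t • x) := (Matrix.mulVec_smul B (q.eval t) x).symm
  have := congrFun key lam
  simpa [hq] using this

set_option maxHeartbeats 2000000 in
/-- analytic perturbation of a simple eigenvalue. Let `U` be an open
neighborhood of `0` in `ℝ^n` and `M : U → M_d(ℝ)` a real-analytic family of matrices
(analyticity expressed entrywise). Suppose `M 0` has a simple real eigenvalue `λ₀ ≠ 0`
(a root of multiplicity one of the characteristic polynomial) with unit eigenvector `X₀`.
Then there are an open sub-neighborhood `V ⊆ U` of `0` and real-analytic maps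
`f : V → ℝ`, `X : V → ℝ^d` with `f 0 = λ₀`, `X 0 = X₀`, and such that for every `v ∈ V`,
`f v` is a simple eigenvalue of `M v` with eigenvector `X v ≠ 0`. -/
theorem statement_9 {n d : ℕ} (U : Set (Fin n → ℝ)) (hU : IsOpen U)
    (h0U : (0 : Fin n → ℝ) ∈ U)
    (M : (Fin n → ℝ) → Matrix (Fin d) (Fin d) ℝ)
    (hM : ∀ v ∈ U, ∀ i j : Fin d, AnalyticAt ℝ (fun w => M w i j) v)
    (lam0 : ℝ) (hlam0 : lam0 ≠ 0)
    (hsimple : (M 0).charpoly.rootMultiplicity lam0 = 1)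
    (X0 : Fin d → ℝ) (hX0 : ‖X0‖ = 1) (heig : M 0 *ᵥ X0 = lam0 • X0) :
    ∃ (V : Set (Fin n → ℝ)) (f : (Fin n → ℝ) → ℝ) (X : (Fin n → ℝ) → Fin d → ℝ),
      V ⊆ U ∧ IsOpen V ∧ (0 : Fin n → ℝ) ∈ V ∧
      (∀ v ∈ V, AnalyticAt ℝ f v) ∧ (∀ v ∈ V, AnalyticAt ℝ X v) ∧
      f 0 = lam0 ∧ X 0 = X0 ∧
      ∀ v ∈ V, (M v).charpoly.rootMultiplicity (f v) = 1 ∧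
        X v ≠ 0 ∧ M v *ᵥ X v = f v • X v := by
  classical
  -- the characteristic function F(v, t) = det(t•1 - M v)
  set F : ((Fin n → ℝ) × ℝ) → ℝ :=
    fun p => (p.2 • (1 : Matrix (Fin d) (Fin d) ℝ) - M p.1).det with hFdef
  have hFeval : ∀ (v : Fin n → ℝ) (t : ℝ), F (v, t) = ((M v).charpoly).eval t :=
    fun v t => (charpoly_eval (M v) t).symm
  have hFanal : ∀ v ∈ U, ∀ t : ℝ, AnalyticAt ℝ F (v, t) := by
    intro v hv t
    apply analyticAt_det_of_entries
    intro i j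
    have h1 : AnalyticAt ℝ (fun p : (Fin n → ℝ) × ℝ => M p.1 i j) (v, t) :=
      AnalyticAt.comp (g := fun w => M w i j) (f := Prod.fst) (x := (v, t)) (hM v hv i j) analyticAt_fst
    have h2 : AnalyticAt ℝ
        (fun p : (Fin n → ℝ) × ℝ => p.2 * (1 : Matrix (Fin d) (Fin d) ℝ) i j) (v, t) :=
      analyticAt_snd.mul analyticAt_const
    simpa [Matrix.sub_apply, Matrix.smul_apply, smul_eq_mul] using h2.fun_sub h1
  have hp0ne : (M 0).charpoly ≠ 0 := (Matrix.charpoly_monic _).ne_zero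
  obtain ⟨hroot0, hder0⟩ := derivative_ne_zero_of_rootMultiplicity_eq_one hp0ne hsimple
  set c : ℝ := ((M 0).charpoly).derivative.eval lam0 with hc
  -- partial derivative of F in the second variable
  have hpart : ∀ v ∈ U, ∀ t : ℝ,
      fderiv ℝ F (v, t) (0, 1) = ((M v).charpoly).derivative.eval t := by
    intro v hv t
    have hF := (hFanal v hv t).differentiableAt.hasFDerivAt
    have hγ : HasDerivAt (fun s : ℝ => ((v : Fin n → ℝ), s)) ((0 : Fin n → ℝ), (1 : ℝ)) t :=
      HasDerivAt.prodMk (hasDerivAt_const t v) (hasDerivAt_id t)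
    have hcomp : HasDerivAt (fun s => F (v, s)) (fderiv ℝ F (v, t) ((0 : Fin n → ℝ), (1:ℝ))) t :=
      hF.comp_hasDerivAt t hγ
    have heq : (fun s => F (v, s)) = fun s => ((M v).charpoly).eval s :=
      funext fun s => hFeval v s
    rw [heq] at hcomp
    exact hcomp.unique (Polynomial.hasDerivAt _ t)
  -- the map G(v,t) = (v, F(v,t)) and its derivative
  set G : ((Fin n → ℝ) × ℝ) → ((Fin n → ℝ) × ℝ) := fun p => (p.1, F p) with hGdef
  have hGanal : AnalyticAt ℝ G ((0 : Fin n → ℝ), lam0) :=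
    analyticAt_fst.prod (hFanal 0 h0U lam0)
  set φ := fderiv ℝ F ((0 : Fin n → ℝ), lam0) with hφ
  have hFd : HasFDerivAt F φ ((0 : Fin n → ℝ), lam0) :=
    (hFanal 0 h0U lam0).differentiableAt.hasFDerivAt
  set L : ((Fin n → ℝ) × ℝ) →L[ℝ] ((Fin n → ℝ) × ℝ) :=
    (ContinuousLinearMap.fst ℝ (Fin n → ℝ) ℝ).prod φ with hL
  have hGd : HasFDerivAt G L ((0 : Fin n → ℝ), lam0) := HasFDerivAt.prodMk hasFDerivAt_fst hFd
  have hφ01 : φ ((0 : Fin n → ℝ), (1:ℝ)) = c := hpart 0 h0U lam0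
  have hLinj : Function.Injective L := by
    intro a b hab
    have h1 : a.1 = b.1 := by simpa [hL] using congrArg Prod.fst hab
    have h2 : φ a = φ b := by
      have := congrArg Prod.snd hab
      simpa [hL] using this
    have h3 : φ (a - b) = 0 := by rw [map_sub, h2, sub_self]
    have h4 : a - b = (a.2 - b.2) • ((0 : Fin n → ℝ), (1:ℝ)) := by
      refine Prod.ext ?_ ?_
      · simp [h1]
      · simp
    rw [h4, _root_.map_smul, hφ01, smul_eq_mul] at h3
    have h5 : a.2 = b.2 := by
      have := mul_eq_zero.mp h3
      rcases this with h | h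
      · have : a.2 - b.2 = 0 := h
        linarith [sub_eq_zero.mp this]
      · exact absurd h hder0
    exact Prod.ext h1 h5
  have hLsurj : Function.Surjective L :=
    LinearMap.injective_iff_surjective.mp hLinj
  let eL : ((Fin n → ℝ) × ℝ) ≃L[ℝ] ((Fin n → ℝ) × ℝ) :=
    (LinearEquiv.ofBijective (L : ((Fin n → ℝ) × ℝ) →ₗ[ℝ] ((Fin n → ℝ) × ℝ))
      ⟨hLinj, hLsurj⟩).toContinuousLinearEquiv
  have heL : (eL : ((Fin n → ℝ) × ℝ) →L[ℝ] ((Fin n → ℝ) × ℝ)) = L := by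
    exact ContinuousLinearMap.ext fun x => rfl
  have hGstrict : HasStrictFDerivAt G
      (eL : ((Fin n → ℝ) × ℝ) →L[ℝ] ((Fin n → ℝ) × ℝ)) ((0 : Fin n → ℝ), lam0) := by
    rw [heL]
    have h := (hGanal.contDiffAt (n := 1)).hasStrictFDerivAt one_ne_zero
    rwa [hGd.fderiv] at h
  set PH := HasStrictFDerivAt.toOpenPartialHomeomorph (f := G) hGstrict with hPH
  have hPHcoe : (PH : ((Fin n → ℝ) × ℝ) → ((Fin n → ℝ) × ℝ)) = G :=
    HasStrictFDerivAt.toOpenPartialHomeomorph_coe hGstrict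
  have hsrc : ((0 : Fin n → ℝ), lam0) ∈ PH.source :=
    HasStrictFDerivAt.mem_toOpenPartialHomeomorph_source hGstrict
  have hG0 : G ((0 : Fin n → ℝ), lam0) = ((0 : Fin n → ℝ), (0:ℝ)) := by
    have : F ((0 : Fin n → ℝ), lam0) = 0 := by rw [hFeval]; exact hroot0
    simp [hGdef, this]
  have htgt : ((0 : Fin n → ℝ), (0:ℝ)) ∈ PH.target := by
    have := PH.map_source hsrc
    rwa [hPHcoe, hG0] at this
  have hsymm0 : PH.symm ((0 : Fin n → ℝ), (0:ℝ)) = ((0 : Fin n → ℝ), lam0) := by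
    have := PH.left_inv hsrc
    rw [hPHcoe, hG0] at this
    exact this
  have hsymm_anal : AnalyticAt ℝ PH.symm ((0 : Fin n → ℝ), (0:ℝ)) := by
    refine PH.analyticAt_symm htgt (i := eL) ?_ ?_
    · rw [hsymm0, hPHcoe]; exact hGanal
    · rw [hsymm0, hPHcoe, hGd.fderiv, heL]
  -- the eigenvalue function
  set f : (Fin n → ℝ) → ℝ := fun v => (PH.symm (v, 0)).2 with hfdef
  have hf0 : f 0 = lam0 := by
    show (PH.symm ((0 : Fin n → ℝ), (0:ℝ))).2 = lam0
    rw [hsymm0]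
  -- the eigenvector function
  set Xf : (Fin n → ℝ) → (Fin d → ℝ) := fun v =>
    c⁻¹ • ((f v • (1 : Matrix (Fin d) (Fin d) ℝ) - M v).adjugate *ᵥ X0) with hXdef
  have hXf0 : Xf 0 = X0 := by
    show c⁻¹ • ((f 0 • (1 : Matrix (Fin d) (Fin d) ℝ) - M 0).adjugate *ᵥ X0) = X0
    rw [hf0, adjugate_eig (M 0) heig hroot0, ← hc]
    exact inv_smul_smul₀ hder0 X0
  -- analyticity of the eigenvector map
  have hXanal : ∀ v ∈ U, AnalyticAt ℝ f v → AnalyticAt ℝ Xf v := by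
    intro v hvU hfv
    have hadj : ∀ i j : Fin d, AnalyticAt ℝ
        (fun w => (f w • (1 : Matrix (Fin d) (Fin d) ℝ) - M w).adjugate i j) v := by
      intro i j
      simp only [Matrix.adjugate_apply]
      apply analyticAt_det_of_entries
      intro k l
      simp only [Matrix.updateRow_apply]
      by_cases hkj : k = j
      · simp only [hkj, if_pos rfl]
        exact analyticAt_const
      · simp only [hkj, if_false]
        have h1 := hM v hvU k l
        have h2 : AnalyticAt ℝ (fun w => f w * (1 : Matrix (Fin d) (Fin d) ℝ) k l) v :=
          hfv.mul analyticAt_const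
        simpa [Matrix.sub_apply, Matrix.smul_apply, smul_eq_mul] using h2.fun_sub h1
    have hXf_eq : Xf = fun w => (fun i => c⁻¹ *
        ∑ j, ((f w • (1 : Matrix (Fin d) (Fin d) ℝ) - M w).adjugate i j * X0 j)) := by
      funext w i
      simp [hXdef, Matrix.mulVec, dotProduct]
    rw [hXf_eq]
    exact AnalyticAt.pi fun i => analyticAt_const.mul <|
      Finset.analyticAt_fun_sum _ fun j _ => (hadj i j).fun_mul analyticAt_const
  -- eventual facts near 0
  have htends : Filter.Tendsto (fun v : Fin n → ℝ => (v, (0:ℝ)))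
      (nhds 0) (nhds ((0 : Fin n → ℝ), (0:ℝ))) :=
    (continuous_id.prodMk continuous_const).continuousAt
  have hEv1 : ∀ᶠ v in nhds (0 : Fin n → ℝ), (v, (0:ℝ)) ∈ PH.target :=
    htends.eventually (PH.open_target.eventually_mem htgt)
  have hEv2 : ∀ᶠ v in nhds (0 : Fin n → ℝ), AnalyticAt ℝ PH.symm (v, (0:ℝ)) :=
    htends.eventually hsymm_anal.eventually_analyticAt
  have hEvU : ∀ᶠ v in nhds (0 : Fin n → ℝ), v ∈ U := hU.eventually_mem h0U
  have hkey : ∀ v : Fin n → ℝ, (v, (0:ℝ)) ∈ PH.target →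
      ((M v).charpoly).eval (f v) = 0 := by
    intro v hv
    have h1 : G (PH.symm (v, 0)) = (v, 0) := by
      have := PH.right_inv hv
      rwa [hPHcoe] at this
    have hfst : (PH.symm (v, 0)).1 = v := by
      simpa [hGdef] using congrArg Prod.fst h1
    have hsnd : F (PH.symm (v, 0)) = 0 := by
      simpa [hGdef] using congrArg Prod.snd h1
    have hps : PH.symm (v, 0) = (v, f v) := Prod.ext hfst rfl
    rw [hps] at hsnd
    rw [← hFeval v (f v)]
    exact hsnd
  -- continuity of the partial derivative along the eigenvalue
  have hfaux : ∀ v : Fin n → ℝ, AnalyticAt ℝ PH.symm (v, (0:ℝ)) → AnalyticAt ℝ f v := by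
    intro v hv
    have hg : AnalyticAt ℝ (fun w : Fin n → ℝ => (w, (0:ℝ))) v :=
      analyticAt_id.prod analyticAt_const
    have h1 := AnalyticAt.comp (f := fun w : Fin n → ℝ => (w, (0:ℝ))) (x := v) hv hg
    have h2 := analyticAt_snd.comp h1
    exact h2
  have hfanal0 : AnalyticAt ℝ f 0 := hfaux 0 hsymm_anal
  have hfderiv_cont : ContinuousAt (fun q => fderiv ℝ F q ((0 : Fin n → ℝ), (1:ℝ)))
      ((0 : Fin n → ℝ), lam0) := by
    have h1 : ContinuousAt (fderiv ℝ F) ((0 : Fin n → ℝ), lam0) :=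
      (hFanal 0 h0U lam0).fderiv.continuousAt
    have h2 := ((ContinuousLinearMap.apply ℝ ℝ
      (((0 : Fin n → ℝ), (1:ℝ)) : (Fin n → ℝ) × ℝ)).continuous.continuousAt).comp h1
    exact h2
  have hκ : ContinuousAt (fun v : Fin n → ℝ => (v, f v)) 0 :=
    continuousAt_id.prodMk hfanal0.continuousAt
  have hcomp : ContinuousAt (fun v => fderiv ℝ F (v, f v) ((0:Fin n → ℝ),(1:ℝ))) 0 := by
    have h0 : (fun v : Fin n → ℝ => (v, f v)) 0 = ((0:Fin n → ℝ), lam0) := by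
      simp [hf0]
    refine ContinuousAt.comp (g := fun q => fderiv ℝ F q ((0 : Fin n → ℝ), (1:ℝ))) ?_ hκ
    have h2 : ((0 : Fin n → ℝ), f 0) = ((0 : Fin n → ℝ), lam0) := by rw [hf0]
    rw [h2]
    exact hfderiv_cont
  have hEvder : ∀ᶠ v in nhds (0 : Fin n → ℝ),
      fderiv ℝ F (v, f v) ((0:Fin n → ℝ),(1:ℝ)) ≠ 0 := by
    refine hcomp.eventually_ne ?_
    show fderiv ℝ F (0, f 0) ((0:Fin n → ℝ),(1:ℝ)) ≠ 0
    rw [hf0, hpart 0 h0U lam0]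
    exact hder0
  have hXanal0 : AnalyticAt ℝ Xf 0 := hXanal 0 h0U hfanal0
  have hX0ne : X0 ≠ 0 := by
    intro h; rw [h] at hX0; simp at hX0
  have hEvXne : ∀ᶠ v in nhds (0 : Fin n → ℝ), Xf v ≠ 0 := by
    refine hXanal0.continuousAt.eventually_ne ?_
    rw [hXf0]; exact hX0ne
  -- assemble the neighborhood
  have hall : ∀ᶠ v in nhds (0 : Fin n → ℝ), v ∈ U ∧ (v, (0:ℝ)) ∈ PH.target ∧
      AnalyticAt ℝ PH.symm (v, (0:ℝ)) ∧
      fderiv ℝ F (v, f v) ((0:Fin n → ℝ),(1:ℝ)) ≠ 0 ∧ Xf v ≠ 0 := by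
    filter_upwards [hEvU, hEv1, hEv2, hEvder, hEvXne] with v h1 h2 h3 h4 h5
    exact ⟨h1, h2, h3, h4, h5⟩
  obtain ⟨V, hVsub, hVopen, h0V⟩ := mem_nhds_iff.mp hall
  refine ⟨V, f, Xf, fun v hv => (hVsub hv).1, hVopen, h0V, ?_, ?_, hf0, hXf0, ?_⟩
  · intro v hv
    exact hfaux v (hVsub hv).2.2.1
  · intro v hv
    exact hXanal v (hVsub hv).1 (hfaux v (hVsub hv).2.2.1)
  · intro v hv
    obtain ⟨hvU, hvT, hvS, hvD, hvX⟩ := hVsub hv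
    have hrootv : ((M v).charpoly).eval (f v) = 0 := hkey v hvT
    have hderv : ((M v).charpoly).derivative.eval (f v) ≠ 0 := by
      rw [← hpart v hvU (f v)]; exact hvD
    refine ⟨rootMultiplicity_eq_one' (Matrix.charpoly_monic _).ne_zero hrootv hderv, hvX, ?_⟩
    have hdet : (f v • (1 : Matrix (Fin d) (Fin d) ℝ) - M v).det = 0 := by
      rw [← charpoly_eval]; exact hrootv
    have h1 : (f v • (1 : Matrix (Fin d) (Fin d) ℝ) - M v) *ᵥ Xf v = 0 := by
      show (f v • (1 : Matrix (Fin d) (Fin d) ℝ) - M v) *ᵥ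
        (c⁻¹ • ((f v • (1 : Matrix (Fin d) (Fin d) ℝ) - M v).adjugate *ᵥ X0)) = 0
      rw [Matrix.mulVec_smul, Matrix.mulVec_mulVec, Matrix.mul_adjugate, hdet]
      simp
    have h2 : f v • Xf v - M v *ᵥ Xf v = 0 := by
      rw [← h1, Matrix.sub_mulVec, Matrix.smul_mulVec, Matrix.one_mulVec]
    have := sub_eq_zero.mp h2
    exact this.symm
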